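/- arXiv:1004.4334 — 2 statements merged into one kernel-verified Lean document; each statement's English description precedes it below -/
import Mathlib

section
/- Let W2, W1, X, Y, Z be discrete random variables forming the Markov chain W2 ↔ W1 ↔ X ↔ Y ↔ Z. Then I(W1;Y|W2) − I(W1;Z|W2) ≤ I(W1;Y|Z,W2) ≤ I(X;Y|Z). -/
open Finset

structure FinProb (Ω : Type) [Fintype Ω] where
  p : Ω → ℝ
  nonneg : ∀ ω, 0 ≤ p ω
  sum_one : ∑ ω, p ω = 1

namespace FinProb

variable {Ω : Type} [Fintype Ω] (μ : FinProb Ω)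

/-- P(X = x) -/
noncomputable def prob {α : Type} [DecidableEq α] (X : Ω → α) (x : α) : ℝ :=
  ∑ ω, if X ω = x then μ.p ω else 0

/-- Shannon entropy (base 2) of a random variable. -/
noncomputable def H {α : Type} [Fintype α] [DecidableEq α] (X : Ω → α) : ℝ :=
  -∑ x, μ.prob X x * Real.logb 2 (μ.prob X x)

/-- Mutual information I(X;Y). -/
noncomputable def I {α β : Type} [Fintype α] [DecidableEq α] [Fintype β] [DecidableEq β]
    (X : Ω → α) (Y : Ω → β) : ℝ :=
  μ.H X + μ.H Y - μ.H (fun ω => (X ω, Y ω))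

/-- Conditional entropy H(X|Z). -/
noncomputable def condH {α γ : Type} [Fintype α] [DecidableEq α] [Fintype γ] [DecidableEq γ]
    (X : Ω → α) (Z : Ω → γ) : ℝ :=
  μ.H (fun ω => (X ω, Z ω)) - μ.H Z

/-- Conditional mutual information I(X;Y|Z). -/
noncomputable def condI {α β γ : Type} [Fintype α] [DecidableEq α] [Fintype β] [DecidableEq β]
    [Fintype γ] [DecidableEq γ] (X : Ω → α) (Y : Ω → β) (Z : Ω → γ) : ℝ :=
  μ.condH X Z + μ.condH Y Z - μ.condH (fun ω => (X ω, Y ω)) Z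

/-- X and Y are conditionally independent given Z. -/
def CondIndep {α β γ : Type} [DecidableEq α] [DecidableEq β] [DecidableEq γ]
    (X : Ω → α) (Y : Ω → β) (Z : Ω → γ) : Prop :=
  ∀ x y z, μ.prob (fun ω => (X ω, Y ω, Z ω)) (x, y, z) * μ.prob Z z
    = μ.prob (fun ω => (X ω, Z ω)) (x, z) * μ.prob (fun ω => (Y ω, Z ω)) (y, z)

/-- X and Y are independent. -/
def Indep {α β : Type} [DecidableEq α] [DecidableEq β] (X : Ω → α) (Y : Ω → β) : Prop :=
  ∀ x y, μ.prob (fun ω => (X ω, Y ω)) (x, y) = μ.prob X x * μ.prob Y y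

end FinProb

/-- Binary entropy function (base 2). -/
noncomputable def binEnt (x : ℝ) : ℝ := -x * Real.logb 2 x - (1 - x) * Real.logb 2 (1 - x)
namespace FinProb

variable {Ω : Type} [Fintype Ω] (μ : FinProb Ω)

lemma sum_prob_mul {α : Type} [Fintype α] [DecidableEq α] (T : Ω → α) (f : α → ℝ) :
    ∑ a, μ.prob T a * f a = ∑ ω, μ.p ω * f (T ω) := by
  simp only [prob, Finset.sum_mul, ite_mul, zero_mul]
  rw [Finset.sum_comm]
  refine Finset.sum_congr rfl fun ω _ => ?_
  simp

lemma sum_prob_eq_one {α : Type} [Fintype α] [DecidableEq α] (T : Ω → α) :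
    ∑ a, μ.prob T a = 1 := by
  have := μ.sum_prob_mul T (fun _ => 1)
  simpa [μ.sum_one] using this

lemma prob_nonneg' {α : Type} [DecidableEq α] (T : Ω → α) (a : α) : 0 ≤ μ.prob T a := by
  refine Finset.sum_nonneg fun ω _ => ?_
  split <;> simp [μ.nonneg]

lemma prob_mono {α β : Type} [DecidableEq α] [DecidableEq β] (T : Ω → α) (S : Ω → β)
    (g : α → β) (h : ∀ ω, S ω = g (T ω)) (a : α) : μ.prob T a ≤ μ.prob S (g a) := by
  refine Finset.sum_le_sum fun ω _ => ?_
  by_cases hT : T ω = a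
  · simp [hT, h ω, le_refl]
  · simp [hT]
    split <;> simp [μ.nonneg]

lemma H_comp_equiv {α β : Type} [Fintype α] [DecidableEq α] [Fintype β] [DecidableEq β]
    (e : α ≃ β) (T : Ω → α) : μ.H (fun ω => e (T ω)) = μ.H T := by
  have hp : ∀ b, μ.prob (fun ω => e (T ω)) b = μ.prob T (e.symm b) := by
    intro b
    simp [prob, Equiv.apply_eq_iff_eq_symm_apply]
  unfold H
  rw [← Equiv.sum_comp e (fun b => μ.prob (fun ω => e (T ω)) b * Real.logb 2 (μ.prob (fun ω => e (T ω)) b))]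
  simp [hp]

lemma H_congr {α β : Type} [Fintype α] [DecidableEq α] [Fintype β] [DecidableEq β]
    (T : Ω → α) (S : Ω → β) (f : α → β) (g : β → α)
    (h1 : ∀ a, g (f a) = a) (h2 : ∀ b, f (g b) = b) (h : ∀ ω, S ω = f (T ω)) :
    μ.H S = μ.H T := by
  have : S = fun ω => (⟨f, g, h1, h2⟩ : α ≃ β) (T ω) := funext h
  rw [this, H_comp_equiv]

lemma H_eq_sum {α : Type} [Fintype α] [DecidableEq α] (T : Ω → α) :
    μ.H T = -∑ ω, μ.p ω * Real.logb 2 (μ.prob T (T ω)) := by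
  rw [H, μ.sum_prob_mul T (fun a => Real.logb 2 (μ.prob T a))]

lemma prob_assoc {α β γ : Type} [DecidableEq α] [DecidableEq β] [DecidableEq γ]
    (X : Ω → α) (Y : Ω → β) (Z : Ω → γ) (a : α) (b : β) (c : γ) :
    μ.prob (fun ω => ((X ω, Y ω), Z ω)) ((a, b), c)
      = μ.prob (fun ω => (X ω, Y ω, Z ω)) (a, b, c) := by
  simp [prob, Prod.ext_iff, and_assoc]

end FinProb
namespace FinProb

variable {Ω : Type} [Fintype Ω] (μ : FinProb Ω)

lemma sum_prob_pair {α γ : Type} [Fintype α] [DecidableEq α] [DecidableEq γ]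
    (X : Ω → α) (Z : Ω → γ) (c : γ) :
    ∑ a, μ.prob (fun ω => (X ω, Z ω)) (a, c) = μ.prob Z c := by
  simp only [prob, Prod.ext_iff]
  rw [Finset.sum_comm]
  refine Finset.sum_congr rfl fun ω _ => ?_
  by_cases hz : Z ω = c <;> simp [hz]

end FinProb
namespace FinProb

variable {Ω : Type} [Fintype Ω] (μ : FinProb Ω)

lemma condI_eq_sum {α β γ : Type} [Fintype α] [DecidableEq α] [Fintype β] [DecidableEq β]
    [Fintype γ] [DecidableEq γ] (X : Ω → α) (Y : Ω → β) (Z : Ω → γ) :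
    μ.condI X Y Z = ∑ t : α × β × γ,
      μ.prob (fun ω => (X ω, Y ω, Z ω)) t *
        (Real.logb 2 (μ.prob (fun ω => (X ω, Y ω, Z ω)) t)
          + Real.logb 2 (μ.prob Z t.2.2)
          - Real.logb 2 (μ.prob (fun ω => (X ω, Z ω)) (t.1, t.2.2))
          - Real.logb 2 (μ.prob (fun ω => (Y ω, Z ω)) (t.2.1, t.2.2))) := by
  rw [μ.sum_prob_mul (fun ω => (X ω, Y ω, Z ω))
      (fun t => Real.logb 2 (μ.prob (fun ω => (X ω, Y ω, Z ω)) t)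
          + Real.logb 2 (μ.prob Z t.2.2)
          - Real.logb 2 (μ.prob (fun ω => (X ω, Z ω)) (t.1, t.2.2))
          - Real.logb 2 (μ.prob (fun ω => (Y ω, Z ω)) (t.2.1, t.2.2)))]
  have e4 : ∑ ω, μ.p ω * Real.logb 2 (μ.prob (fun ω => ((X ω, Y ω), Z ω)) ((X ω, Y ω), Z ω))
      = ∑ ω, μ.p ω * Real.logb 2 (μ.prob (fun ω => (X ω, Y ω, Z ω)) (X ω, Y ω, Z ω)) := by
    refine Finset.sum_congr rfl fun ω _ => ?_
    rw [μ.prob_assoc X Y Z]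
  simp only [condI, condH, μ.H_eq_sum]
  simp only [mul_add, mul_sub, Finset.sum_add_distrib, Finset.sum_sub_distrib]
  rw [e4]
  ring
end FinProb
lemma aux_ineq (p pz pxz pyz : ℝ) (hp : 0 ≤ p) (hz : 0 ≤ pz)
    (hxz : 0 ≤ pxz) (hyz : 0 ≤ pyz) (h1 : p ≤ pz) (h2 : p ≤ pxz) (h3 : p ≤ pyz) :
    (p - pxz * pyz / pz) / Real.log 2 ≤
      p * (Real.logb 2 p + Real.logb 2 pz - Real.logb 2 pxz - Real.logb 2 pyz) := by
  have hlog2 : 0 < Real.log 2 := Real.log_pos (by norm_num)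
  rcases eq_or_lt_of_le hp with h0 | h0
  · have hs : 0 ≤ pxz * pyz / pz := by positivity
    rw [← h0, zero_sub, neg_div, zero_mul]
    have : 0 ≤ pxz * pyz / pz / Real.log 2 := by positivity
    linarith
  · have hz' : 0 < pz := lt_of_lt_of_le h0 h1
    have hxz' : 0 < pxz := lt_of_lt_of_le h0 h2
    have hyz' : 0 < pyz := lt_of_lt_of_le h0 h3
    have hlb : Real.logb 2 p + Real.logb 2 pz - Real.logb 2 pxz - Real.logb 2 pyz
        = Real.log (p * pz / (pxz * pyz)) / Real.log 2 := by
      rw [Real.log_div (by positivity) (by positivity), Real.log_mul h0.ne' hz'.ne',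
        Real.log_mul hxz'.ne' hyz'.ne']
      simp only [Real.logb]
      ring
    rw [hlb, mul_div_assoc', div_le_div_iff_of_pos_right hlog2]
    have hlt : 1 - pxz * pyz / (p * pz) ≤ Real.log (p * pz / (pxz * pyz)) := by
      have h4 := Real.log_le_sub_one_of_pos
        (show (0:ℝ) < (p * pz / (pxz * pyz))⁻¹ by positivity)
      rw [Real.log_inv] at h4
      have h5 : (p * pz / (pxz * pyz))⁻¹ = pxz * pyz / (p * pz) := by
        rw [inv_div]
      rw [h5] at h4
      linarith
    have e : p * (1 - pxz * pyz / (p * pz)) = p - pxz * pyz / pz := by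
      field_simp
    nlinarith [mul_le_mul_of_nonneg_left hlt hp]

lemma sum_comm3 {α β γ : Type} [Fintype α] [Fintype β] [Fintype γ] (f : α → β → γ → ℝ) :
    ∑ a, ∑ b, ∑ c, f a b c = ∑ c, ∑ b, ∑ a, f a b c := by
  calc ∑ a, ∑ b, ∑ c, f a b c = ∑ a, ∑ c, ∑ b, f a b c :=
        Finset.sum_congr rfl fun a _ => Finset.sum_comm
    _ = ∑ c, ∑ a, ∑ b, f a b c := Finset.sum_comm
    _ = ∑ c, ∑ b, ∑ a, f a b c := Finset.sum_congr rfl fun c _ => Finset.sum_comm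

namespace FinProb

variable {Ω : Type} [Fintype Ω] (μ : FinProb Ω)

lemma sum_ratio_eq_one {α β γ : Type} [Fintype α] [DecidableEq α] [Fintype β] [DecidableEq β]
    [Fintype γ] [DecidableEq γ] (X : Ω → α) (Y : Ω → β) (Z : Ω → γ) :
    ∑ t : α × β × γ, μ.prob (fun ω => (X ω, Z ω)) (t.1, t.2.2)
        * μ.prob (fun ω => (Y ω, Z ω)) (t.2.1, t.2.2) / μ.prob Z t.2.2 = 1 := by
  simp only [Fintype.sum_prod_type]
  rw [sum_comm3 (fun a b c => μ.prob (fun ω => (X ω, Z ω)) (a, c)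
        * μ.prob (fun ω => (Y ω, Z ω)) (b, c) / μ.prob Z c)]
  have hinner : ∀ c : γ, ∑ b, ∑ a, μ.prob (fun ω => (X ω, Z ω)) (a, c)
      * μ.prob (fun ω => (Y ω, Z ω)) (b, c) / μ.prob Z c = μ.prob Z c := by
    intro c
    have hx := μ.sum_prob_pair X Z c
    have hy := μ.sum_prob_pair Y Z c
    rcases eq_or_ne (μ.prob Z c) 0 with h | h
    · simp [h]
    · have s1 : ∀ b : β, ∑ a, μ.prob (fun ω => (X ω, Z ω)) (a, c)
          * μ.prob (fun ω => (Y ω, Z ω)) (b, c) / μ.prob Z c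
          = μ.prob (fun ω => (Y ω, Z ω)) (b, c) := by
        intro b
        simp only [mul_div_assoc]
        rw [← Finset.sum_mul, hx]
        field_simp
      rw [Finset.sum_congr rfl fun b _ => s1 b]
      exact hy
  rw [Finset.sum_congr rfl fun c _ => hinner c]
  exact μ.sum_prob_eq_one Z

lemma condI_nonneg {α β γ : Type} [Fintype α] [DecidableEq α] [Fintype β] [DecidableEq β]
    [Fintype γ] [DecidableEq γ] (X : Ω → α) (Y : Ω → β) (Z : Ω → γ) :
    0 ≤ μ.condI X Y Z := by
  rw [μ.condI_eq_sum X Y Z]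
  have key : ∀ t : α × β × γ,
      (μ.prob (fun ω => (X ω, Y ω, Z ω)) t
        - μ.prob (fun ω => (X ω, Z ω)) (t.1, t.2.2)
          * μ.prob (fun ω => (Y ω, Z ω)) (t.2.1, t.2.2) / μ.prob Z t.2.2) / Real.log 2
      ≤ μ.prob (fun ω => (X ω, Y ω, Z ω)) t *
        (Real.logb 2 (μ.prob (fun ω => (X ω, Y ω, Z ω)) t)
          + Real.logb 2 (μ.prob Z t.2.2)
          - Real.logb 2 (μ.prob (fun ω => (X ω, Z ω)) (t.1, t.2.2))
          - Real.logb 2 (μ.prob (fun ω => (Y ω, Z ω)) (t.2.1, t.2.2))) := by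
    intro t
    refine aux_ineq _ _ _ _ (μ.prob_nonneg' _ t) (μ.prob_nonneg' _ _) (μ.prob_nonneg' _ _)
      (μ.prob_nonneg' _ _) ?_ ?_ ?_
    · exact μ.prob_mono (fun ω => (X ω, Y ω, Z ω)) Z (fun t => t.2.2) (fun ω => rfl) t
    · exact μ.prob_mono (fun ω => (X ω, Y ω, Z ω)) (fun ω => (X ω, Z ω)) (fun t => (t.1, t.2.2)) (fun ω => rfl) t
    · exact μ.prob_mono (fun ω => (X ω, Y ω, Z ω)) (fun ω => (Y ω, Z ω)) (fun t => (t.2.1, t.2.2)) (fun ω => rfl) t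
  have hsum := Finset.sum_le_sum (s := Finset.univ) (fun t _ => key t)
  have h1 : ∑ t : α × β × γ, μ.prob (fun ω => (X ω, Y ω, Z ω)) t = 1 :=
    μ.sum_prob_eq_one _
  have h2 := μ.sum_ratio_eq_one X Y Z
  calc (0:ℝ) = ∑ t : α × β × γ,
      (μ.prob (fun ω => (X ω, Y ω, Z ω)) t
        - μ.prob (fun ω => (X ω, Z ω)) (t.1, t.2.2)
          * μ.prob (fun ω => (Y ω, Z ω)) (t.2.1, t.2.2) / μ.prob Z t.2.2) / Real.log 2 := by
        rw [← Finset.sum_div, Finset.sum_sub_distrib, h1, h2]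
        simp
    _ ≤ _ := hsum

end FinProb
namespace FinProb

variable {Ω : Type} [Fintype Ω] (μ : FinProb Ω)

lemma condI_eq_zero {α β γ : Type} [Fintype α] [DecidableEq α] [Fintype β] [DecidableEq β]
    [Fintype γ] [DecidableEq γ] {X : Ω → α} {Y : Ω → β} {Z : Ω → γ}
    (h : μ.CondIndep X Y Z) : μ.condI X Y Z = 0 := by
  rw [μ.condI_eq_sum X Y Z]
  refine Finset.sum_eq_zero fun t _ => ?_
  obtain ⟨a, b, c⟩ := t
  rcases eq_or_lt_of_le (μ.prob_nonneg' (fun ω => (X ω, Y ω, Z ω)) (a, b, c)) with h0 | h0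
  · rw [← h0, zero_mul]
  · have hz : 0 < μ.prob Z c :=
      lt_of_lt_of_le h0 (μ.prob_mono (fun ω => (X ω, Y ω, Z ω)) Z
        (fun t => t.2.2) (fun ω => rfl) (a, b, c))
    have hxz : 0 < μ.prob (fun ω => (X ω, Z ω)) (a, c) :=
      lt_of_lt_of_le h0 (μ.prob_mono (fun ω => (X ω, Y ω, Z ω)) (fun ω => (X ω, Z ω))
        (fun t => (t.1, t.2.2)) (fun ω => rfl) (a, b, c))
    have hyz : 0 < μ.prob (fun ω => (Y ω, Z ω)) (b, c) :=
      lt_of_lt_of_le h0 (μ.prob_mono (fun ω => (X ω, Y ω, Z ω)) (fun ω => (Y ω, Z ω))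
        (fun t => (t.2.1, t.2.2)) (fun ω => rfl) (a, b, c))
    have hb : Real.logb 2 (μ.prob (fun ω => (X ω, Y ω, Z ω)) (a, b, c)) + Real.logb 2 (μ.prob Z c)
        = Real.logb 2 (μ.prob (fun ω => (X ω, Z ω)) (a, c))
          + Real.logb 2 (μ.prob (fun ω => (Y ω, Z ω)) (b, c)) := by
      rw [← Real.logb_mul h0.ne' hz.ne', h a b c, Real.logb_mul hxz.ne' hyz.ne']
    have : Real.logb 2 (μ.prob (fun ω => (X ω, Y ω, Z ω)) (a, b, c)) + Real.logb 2 (μ.prob Z c)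
        - Real.logb 2 (μ.prob (fun ω => (X ω, Z ω)) (a, c))
        - Real.logb 2 (μ.prob (fun ω => (Y ω, Z ω)) (b, c)) = 0 := by linarith
    rw [this, mul_zero]

lemma condI_comm {α β γ : Type} [Fintype α] [DecidableEq α] [Fintype β] [DecidableEq β]
    [Fintype γ] [DecidableEq γ] (X : Ω → α) (Y : Ω → β) (Z : Ω → γ) :
    μ.condI X Y Z = μ.condI Y X Z := by
  have hH : μ.H (fun ω => ((X ω, Y ω), Z ω)) = μ.H (fun ω => ((Y ω, X ω), Z ω)) :=
    μ.H_congr (fun ω => ((Y ω, X ω), Z ω)) (fun ω => ((X ω, Y ω), Z ω))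
      (fun t => ((t.1.2, t.1.1), t.2)) (fun t => ((t.1.2, t.1.1), t.2))
      (by rintro ⟨⟨a, b⟩, c⟩; rfl) (by rintro ⟨⟨a, b⟩, c⟩; rfl) (fun ω => rfl)
  simp only [condI, condH]
  rw [hH]
  ring

lemma condI_congr3 {α β γ γ' : Type} [Fintype α] [DecidableEq α] [Fintype β] [DecidableEq β]
    [Fintype γ] [DecidableEq γ] [Fintype γ'] [DecidableEq γ']
    (X : Ω → α) (Y : Ω → β) (C : Ω → γ) (C' : Ω → γ') (f : γ → γ') (g : γ' → γ)
    (h1 : ∀ c, g (f c) = c) (h2 : ∀ c, f (g c) = c) (h : ∀ ω, C' ω = f (C ω)) :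
    μ.condI X Y C' = μ.condI X Y C := by
  have hZ : μ.H C' = μ.H C := μ.H_congr C C' f g h1 h2 h
  have hXZ : μ.H (fun ω => (X ω, C' ω)) = μ.H (fun ω => (X ω, C ω)) :=
    μ.H_congr _ _ (fun t => (t.1, f t.2)) (fun t => (t.1, g t.2))
      (by rintro ⟨a, c⟩; simp [h1]) (by rintro ⟨a, c⟩; simp [h2]) (fun ω => by simp [h ω])
  have hYZ : μ.H (fun ω => (Y ω, C' ω)) = μ.H (fun ω => (Y ω, C ω)) :=
    μ.H_congr _ _ (fun t => (t.1, f t.2)) (fun t => (t.1, g t.2))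
      (by rintro ⟨a, c⟩; simp [h1]) (by rintro ⟨a, c⟩; simp [h2]) (fun ω => by simp [h ω])
  have hXYZ : μ.H (fun ω => ((X ω, Y ω), C' ω)) = μ.H (fun ω => ((X ω, Y ω), C ω)) :=
    μ.H_congr _ _ (fun t => (t.1, f t.2)) (fun t => (t.1, g t.2))
      (by rintro ⟨a, c⟩; simp [h1]) (by rintro ⟨a, c⟩; simp [h2]) (fun ω => by simp [h ω])
  simp only [condI, condH]
  rw [hZ, hXZ, hYZ, hXYZ]

lemma condI_chain {α β γ δ : Type} [Fintype α] [DecidableEq α] [Fintype β] [DecidableEq β]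
    [Fintype γ] [DecidableEq γ] [Fintype δ] [DecidableEq δ]
    (A : Ω → α) (B : Ω → β) (C : Ω → γ) (D : Ω → δ) :
    μ.condI A (fun ω => (B ω, C ω)) D
      = μ.condI A C D + μ.condI A B (fun ω => (C ω, D ω)) := by
  have r1 : μ.H (fun ω => (A ω, (C ω, D ω))) = μ.H (fun ω => ((A ω, C ω), D ω)) :=
    μ.H_congr _ _ (fun t => (t.1.1, (t.1.2, t.2))) (fun t => ((t.1, t.2.1), t.2.2))
      (by rintro ⟨⟨a, c⟩, d⟩; rfl) (by rintro ⟨a, c, d⟩; rfl) (fun ω => rfl)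
  have r2 : μ.H (fun ω => (B ω, (C ω, D ω))) = μ.H (fun ω => ((B ω, C ω), D ω)) :=
    μ.H_congr _ _ (fun t => (t.1.1, (t.1.2, t.2))) (fun t => ((t.1, t.2.1), t.2.2))
      (by rintro ⟨⟨a, c⟩, d⟩; rfl) (by rintro ⟨a, c, d⟩; rfl) (fun ω => rfl)
  have r3 : μ.H (fun ω => ((A ω, B ω), (C ω, D ω)))
      = μ.H (fun ω => ((A ω, (B ω, C ω)), D ω)) :=
    μ.H_congr _ _ (fun t => ((t.1.1, t.1.2.1), (t.1.2.2, t.2)))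
      (fun t => ((t.1.1, (t.1.2, t.2.1)), t.2.2))
      (by rintro ⟨⟨a, b, c⟩, d⟩; rfl) (by rintro ⟨⟨a, b⟩, c, d⟩; rfl) (fun ω => rfl)
  simp only [condI, condH]
  rw [r1, r2, r3]
  ring

lemma condI_chain' {α β γ δ : Type} [Fintype α] [DecidableEq α] [Fintype β] [DecidableEq β]
    [Fintype γ] [DecidableEq γ] [Fintype δ] [DecidableEq δ]
    (A : Ω → α) (B : Ω → β) (C : Ω → γ) (D : Ω → δ) :
    μ.condI A (fun ω => (B ω, C ω)) D
      = μ.condI A B D + μ.condI A C (fun ω => (B ω, D ω)) := by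
  have r1 : μ.H (fun ω => (A ω, (B ω, D ω))) = μ.H (fun ω => ((A ω, B ω), D ω)) :=
    μ.H_congr _ _ (fun t => (t.1.1, (t.1.2, t.2))) (fun t => ((t.1, t.2.1), t.2.2))
      (by rintro ⟨⟨a, c⟩, d⟩; rfl) (by rintro ⟨a, c, d⟩; rfl) (fun ω => rfl)
  have r2 : μ.H (fun ω => (C ω, (B ω, D ω))) = μ.H (fun ω => ((B ω, C ω), D ω)) :=
    μ.H_congr _ _ (fun t => (t.1.2, (t.1.1, t.2))) (fun t => ((t.2.1, t.1), t.2.2))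
      (by rintro ⟨⟨b, c⟩, d⟩; rfl) (by rintro ⟨c, b, d⟩; rfl) (fun ω => rfl)
  have r3 : μ.H (fun ω => ((A ω, C ω), (B ω, D ω)))
      = μ.H (fun ω => ((A ω, (B ω, C ω)), D ω)) :=
    μ.H_congr _ _ (fun t => ((t.1.1, t.1.2.2), (t.1.2.1, t.2)))
      (fun t => ((t.1.1, (t.2.1, t.1.2)), t.2.2))
      (by rintro ⟨⟨a, b, c⟩, d⟩; rfl) (by rintro ⟨⟨a, c⟩, b, d⟩; rfl) (fun ω => rfl)
  simp only [condI, condH]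
  rw [r1, r2, r3]
  ring

end FinProb
theorem stmt3 {Ω W2 W1 X Y Z : Type} [Fintype Ω]
    [Fintype W2] [DecidableEq W2] [Fintype W1] [DecidableEq W1]
    [Fintype X] [DecidableEq X] [Fintype Y] [DecidableEq Y] [Fintype Z] [DecidableEq Z]
    (μ : FinProb Ω) (w2 : Ω → W2) (w1 : Ω → W1) (x : Ω → X) (y : Ω → Y) (z : Ω → Z)
    (h1 : μ.CondIndep w2 (fun ω => (x ω, y ω, z ω)) w1)
    (h2 : μ.CondIndep (fun ω => (w2 ω, w1 ω)) (fun ω => (y ω, z ω)) x)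
    (h3 : μ.CondIndep (fun ω => (w2 ω, w1 ω, x ω)) z y) :
    μ.condI w1 y w2 - μ.condI w1 z w2 ≤ μ.condI w1 y (fun ω => (z ω, w2 ω)) ∧
      μ.condI w1 y (fun ω => (z ω, w2 ω)) ≤ μ.condI x y z := by
  constructor
  · have c1 := μ.condI_chain w1 y z w2
    have c2 := μ.condI_chain' w1 y z w2
    have n1 := μ.condI_nonneg w1 z (fun ω => (y ω, w2 ω))
    linarith
  · have t1 := μ.condI_chain' y w2 w1 z
    have t2 := μ.condI_chain y (fun ω => (w2 ω, w1 ω)) x z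
    have t3 := μ.condI_chain' y (fun ω => (w2 ω, w1 ω)) x z
    have t4 := μ.condI_chain (fun ω => (w2 ω, w1 ω)) y z x
    have z0 := μ.condI_eq_zero h2
    have n2 := μ.condI_nonneg y w2 z
    have n3 := μ.condI_nonneg y x (fun ω => ((w2 ω, w1 ω), z ω))
    have n4 := μ.condI_nonneg (fun ω => (w2 ω, w1 ω)) z x
    have e1a := μ.condI_comm w1 y (fun ω => (z ω, w2 ω))
    have e1b := μ.condI_congr3 y w1 (fun ω => (w2 ω, z ω)) (fun ω => (z ω, w2 ω))
      (fun t => (t.2, t.1)) (fun t => (t.2, t.1))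
      (by rintro ⟨a, b⟩; rfl) (by rintro ⟨a, b⟩; rfl) (fun ω => rfl)
    have e2a := μ.condI_comm y (fun ω => (w2 ω, w1 ω)) (fun ω => (x ω, z ω))
    have e2b := μ.condI_congr3 (fun ω => (w2 ω, w1 ω)) y (fun ω => (z ω, x ω))
      (fun ω => (x ω, z ω)) (fun t => (t.2, t.1)) (fun t => (t.2, t.1))
      (by rintro ⟨a, b⟩; rfl) (by rintro ⟨a, b⟩; rfl) (fun ω => rfl)
    have e3 := μ.condI_comm y x z
    linarith
end

section
/- Let S, F̂ be discrete random variables with S taking values in a finite set of cardinality M ≥ 2, and suppose P(F̂ ≠ S) ≤ ε with 0 < ε < 1. Then H(S | F̂) ≤ h(ε) + ε·log₂(M), where h(ε) = −ε log₂ ε − (1−ε) log₂(1−ε) is the binary entropy function. -/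
open Finset

section FanoAux

open Finset

variable {Ω : Type} [Fintype Ω]

lemma FinProb.prob_nonneg {α : Type} [DecidableEq α] (μ : FinProb Ω) (X : Ω → α) (x : α) :
    0 ≤ μ.prob X x :=
  Finset.sum_nonneg fun ω _ => by split <;> simp [μ.nonneg ω]

lemma FinProb.sum_prob {α : Type} [Fintype α] [DecidableEq α] (μ : FinProb Ω) (X : Ω → α) :
    ∑ x, μ.prob X x = 1 := by
  rw [← μ.sum_one]
  unfold FinProb.prob
  rw [Finset.sum_comm]
  exact Finset.sum_congr rfl fun ω _ => by simp

lemma FinProb.marginal {α β : Type} [Fintype α] [DecidableEq α] [DecidableEq β] (μ : FinProb Ω)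
    (X : Ω → α) (Y : Ω → β) (y : β) :
    ∑ x, μ.prob (fun ω => (X ω, Y ω)) (x, y) = μ.prob Y y := by
  unfold FinProb.prob
  rw [Finset.sum_comm]
  refine Finset.sum_congr rfl fun ω _ => ?_
  by_cases h : Y ω = y <;> simp [Prod.ext_iff, h]

lemma fano_gibbs {ι : Type} [Fintype ι] (q r : ι → ℝ)
    (hq : ∀ z, 0 ≤ q z) (hr : ∀ z, 0 ≤ r z)
    (hsum : ∑ z, r z ≤ ∑ z, q z)
    (hsupp : ∀ z, q z ≠ 0 → r z ≠ 0) :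
    ∑ z, q z * Real.logb 2 (r z) ≤ ∑ z, q z * Real.logb 2 (q z) := by
  have hlog2 : (0:ℝ) < Real.log 2 := Real.log_pos (by norm_num)
  have key : ∑ z, q z * Real.log (r z) ≤ ∑ z, q z * Real.log (q z) := by
    have h1 : ∀ z ∈ univ, q z * Real.log (r z) - q z * Real.log (q z) ≤ r z - q z := by
      intro z _
      by_cases h0 : q z = 0
      · simp [h0, hr z]
      · have hqz : 0 < q z := (hq z).lt_of_ne (Ne.symm h0)
        have hrz : 0 < r z := (hr z).lt_of_ne (Ne.symm (hsupp z h0))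
        have := Real.log_le_sub_one_of_pos (x := r z / q z) (by positivity)
        rw [Real.log_div (ne_of_gt hrz) (ne_of_gt hqz)] at this
        have h2 : q z * (Real.log (r z) - Real.log (q z)) ≤ q z * (r z / q z - 1) :=
          mul_le_mul_of_nonneg_left this (hq z)
        have h3 : q z * (r z / q z - 1) = r z - q z := by field_simp
        nlinarith
    have := Finset.sum_le_sum h1
    rw [Finset.sum_sub_distrib, Finset.sum_sub_distrib] at this
    linarith
  unfold Real.logb
  simp only [← mul_div_assoc, ← Finset.sum_div]
  gcongr

lemma fano_main_bound {S : Type} [Fintype S] [DecidableEq S]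
    (μ : FinProb Ω) (s fhat : Ω → S) (m : S → S → ℝ)
    (hm : ∀ x y, 0 < m x y) (hm1 : ∀ y, ∑ x, m x y ≤ 1) :
    μ.condH s fhat ≤ -∑ z : S × S, μ.prob (fun ω => (s ω, fhat ω)) z * Real.logb 2 (m z.1 z.2) := by
  set q : S × S → ℝ := μ.prob (fun ω => (s ω, fhat ω)) with hq
  set p2 : S → ℝ := μ.prob fhat with hp2
  have hqn : ∀ z, 0 ≤ q z := fun z => μ.prob_nonneg _ z
  have hp2n : ∀ y, 0 ≤ p2 y := fun y => μ.prob_nonneg _ y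
  have hmarg : ∀ y, ∑ x, q (x, y) = p2 y := fun y => μ.marginal s fhat y
  have hsupp : ∀ z : S × S, q z ≠ 0 → p2 z.2 ≠ 0 := by
    intro z h0
    have h1 : q z ≤ p2 z.2 := by
      rw [← hmarg z.2]
      calc q z = q (z.1, z.2) := by rw [Prod.mk.eta]
        _ ≤ ∑ x, q (x, z.2) :=
          Finset.single_le_sum (fun x _ => hqn (x, z.2)) (Finset.mem_univ z.1)
    have h2 : 0 < q z := (hqn z).lt_of_ne (Ne.symm h0)
    exact ne_of_gt (lt_of_lt_of_le h2 h1)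
  set r : S × S → ℝ := fun z => p2 z.2 * m z.1 z.2 with hr
  have hrn : ∀ z, 0 ≤ r z := fun z => mul_nonneg (hp2n _) (hm _ _).le
  have hsumq : ∑ z, q z = 1 := μ.sum_prob _
  have hsumr : ∑ z : S × S, r z ≤ 1 := by
    show ∑ z : S × S, p2 z.2 * m z.1 z.2 ≤ 1
    rw [Fintype.sum_prod_type, Finset.sum_comm]
    calc ∑ y, ∑ x, p2 y * m x y = ∑ y, p2 y * ∑ x, m x y := by
          simp [Finset.mul_sum]
      _ ≤ ∑ y, p2 y * 1 :=
          Finset.sum_le_sum (fun y _ => mul_le_mul_of_nonneg_left (hm1 y) (hp2n y))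
      _ = 1 := by simpa using μ.sum_prob fhat
  have hg := fano_gibbs q r hqn hrn (by rw [hsumq]; exact hsumr)
    (fun z h0 => mul_ne_zero (hsupp z h0) (ne_of_gt (hm _ _)))
  have hsplit : ∑ z : S × S, q z * Real.logb 2 (r z)
      = ∑ z : S × S, q z * Real.logb 2 (p2 z.2) + ∑ z : S × S, q z * Real.logb 2 (m z.1 z.2) := by
    rw [← Finset.sum_add_distrib]
    refine Finset.sum_congr rfl fun z _ => ?_
    by_cases h0 : q z = 0
    · simp [h0]
    · show q z * Real.logb 2 (p2 z.2 * m z.1 z.2) = _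
      rw [Real.logb_mul (hsupp z h0) (ne_of_gt (hm _ _)), mul_add]
  have hfhat : ∑ z : S × S, q z * Real.logb 2 (p2 z.2) = ∑ y, p2 y * Real.logb 2 (p2 y) := by
    rw [Fintype.sum_prod_type, Finset.sum_comm]
    refine Finset.sum_congr rfl fun y _ => ?_
    have he : ∀ x : S, q (x, y) * Real.logb 2 (p2 (x, y).2) = q (x, y) * Real.logb 2 (p2 y) :=
      fun x => rfl
    rw [Finset.sum_congr rfl fun x _ => he x, ← Finset.sum_mul, hmarg y]
  unfold FinProb.condH FinProb.H
  rw [hsplit, hfhat] at hg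
  linarith

end FanoAux

theorem stmt8 {Ω S : Type} [Fintype Ω] [Fintype S] [DecidableEq S]
    (μ : FinProb Ω) (s fhat : Ω → S) (ε : ℝ)
    (hM : 2 ≤ Fintype.card S)
    (hε0 : 0 < ε) (hε1 : ε < 1)
    (herr : (∑ ω, if fhat ω ≠ s ω then μ.p ω else 0) ≤ ε) :
    μ.condH s fhat ≤ binEnt ε + ε * Real.logb 2 (Fintype.card S) := by
  classical
  unfold binEnt
  set M : ℝ := ((Fintype.card S : ℕ) : ℝ) with hMdef
  have hM1 : (2:ℝ) ≤ M := by rw [hMdef]; exact_mod_cast hM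
  have hM0 : (0:ℝ) < M := by linarith
  have h1ε : (0:ℝ) < 1 - ε := by linarith
  set q : S × S → ℝ := μ.prob (fun ω => (s ω, fhat ω)) with hq
  have hqn : ∀ z, 0 ≤ q z := fun z => μ.prob_nonneg _ z
  have hsumq : ∑ z, q z = 1 := μ.sum_prob _
  set P : ℝ := ∑ z : S × S, (if z.1 = z.2 then 0 else q z) with hP
  set D : ℝ := ∑ z : S × S, (if z.1 = z.2 then q z else 0) with hD
  have hDP : D + P = 1 := by
    rw [hD, hP, ← Finset.sum_add_distrib, ← hsumq]
    exact Finset.sum_congr rfl fun z _ => by by_cases h : z.1 = z.2 <;> simp [h]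
  have hP0 : 0 ≤ P :=
    Finset.sum_nonneg fun z _ => by by_cases h : z.1 = z.2 <;> simp [h, hqn z]
  have hPe : P = ∑ ω, if fhat ω ≠ s ω then μ.p ω else 0 := by
    have step1 : P = ∑ ω, ∑ z : S × S,
        (if z.1 = z.2 then 0 else if (s ω, fhat ω) = z then μ.p ω else 0) := by
      rw [hP, ← Finset.sum_comm]
      refine Finset.sum_congr rfl fun z _ => ?_
      by_cases h : z.1 = z.2 <;> simp [h, hq, FinProb.prob]
    rw [step1]
    refine Finset.sum_congr rfl fun ω _ => ?_
    rw [Finset.sum_eq_single ((s ω, fhat ω))]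
    · show (if s ω = fhat ω then (0:ℝ) else if (s ω, fhat ω) = (s ω, fhat ω) then μ.p ω else 0)
          = if fhat ω ≠ s ω then μ.p ω else 0
      by_cases h : s ω = fhat ω
      · rw [if_pos h, if_neg (not_not_intro h.symm)]
      · rw [if_neg h, if_pos rfl, if_pos (fun hh => h hh.symm)]
    · intro z _ hz
      by_cases h : z.1 = z.2 <;> simp [h, Ne.symm hz]
    · simp
  have hPε : P ≤ ε := by rw [hPe]; exact herr
  set a : ℝ := Real.logb 2 (1 - ε) with ha
  set bb : ℝ := Real.logb 2 ε with hbb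
  set c : ℝ := Real.logb 2 M with hc
  have hc0 : 0 ≤ c := Real.logb_nonneg (by norm_num) (by linarith)
  by_cases hcase : ε ≤ M * (1 - ε)
  · -- main case: use kernel m x y = if x = y then 1-ε else ε/M
    have hm1A : ∀ y : S, ∑ x : S, (if x = y then 1 - ε else ε / M) ≤ 1 := by
      intro y
      have hst : ∑ x : S, (if x = y then 1 - ε else ε / M)
          = ∑ x : S, (ε / M + if x = y then (1 - ε) - ε / M else 0) := by
        refine Finset.sum_congr rfl fun x _ => ?_
        by_cases h : x = y <;> simp [h]
      rw [hst, Finset.sum_add_distrib, Finset.sum_const, Finset.sum_ite_eq' Finset.univ y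
        (fun _ => (1 - ε) - ε / M)]
      simp only [Finset.mem_univ, if_pos, Finset.card_univ, nsmul_eq_mul]
      have hMε : M * (ε / M) = ε := by field_simp
      have hεM : 0 ≤ ε / M := by positivity
      rw [← hMdef] at *
      nlinarith
    have key := fano_main_bound μ s fhat (fun x y => if x = y then 1 - ε else ε / M)
      (fun x y => by split <;> positivity) hm1A
    rw [← hq] at key
    have hrhs : ∑ z : S × S, q z * Real.logb 2 (if z.1 = z.2 then 1 - ε else ε / M)
        = D * a + P * (bb - c) := by
      have hterm : ∀ z : S × S, q z * Real.logb 2 (if z.1 = z.2 then 1 - ε else ε / M)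
          = (if z.1 = z.2 then q z else 0) * a + (if z.1 = z.2 then 0 else q z) * (bb - c) := by
        intro z
        by_cases h : z.1 = z.2
        · simp [h, ha]
        · simp [h, hbb, hc, Real.logb_div (ne_of_gt hε0) (ne_of_gt hM0)]
      rw [Finset.sum_congr rfl fun z _ => hterm z, Finset.sum_add_distrib,
        ← Finset.sum_mul, ← Finset.sum_mul, ← hP, ← hD]
    rw [hrhs] at key
    have habc : 0 ≤ a - bb + c := by
      have h1 : bb ≤ Real.logb 2 (M * (1 - ε)) :=
        Real.logb_le_logb_of_le (by norm_num) hε0 hcase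
      rw [Real.logb_mul (ne_of_gt hM0) (ne_of_gt h1ε)] at h1
      linarith
    have hD1 : D = 1 - P := by linarith
    rw [hD1] at key
    nlinarith [mul_nonneg (sub_nonneg.2 hPε) habc]
  · -- degenerate case: condH ≤ logb 2 M suffices
    push_neg at hcase
    have key := fano_main_bound μ s fhat (fun _ _ => 1 / M)
      (fun _ _ => by positivity)
      (fun y => by
        rw [Finset.sum_const, Finset.card_univ, nsmul_eq_mul, ← hMdef]
        rw [mul_one_div, div_self (ne_of_gt hM0)])
    rw [← hq] at key
    have hrhs : ∑ z : S × S, q z * Real.logb 2 (1 / M) = -c := by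
      rw [← Finset.sum_mul, hsumq, one_mul, one_div, Real.logb_inv, hc]
    rw [hrhs, neg_neg] at key
    have hac : c + a ≤ 0 := by
      have h1 : Real.logb 2 (M * (1 - ε)) ≤ 0 :=
        Real.logb_nonpos (by norm_num) (by positivity) (by nlinarith)
      rw [Real.logb_mul (ne_of_gt hM0) (ne_of_gt h1ε)] at h1
      linarith
    have hbb0 : bb ≤ 0 := Real.logb_nonpos (by norm_num) hε0.le hε1.le
    nlinarith
end
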